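/- Assume the spectra of A and S are disjoint. Let (Π_x, Π_ξ) solve the closed-loop Sylvester equation, let Π ∈ ℝ^{n×ν} solve ΠS = AΠ + PL, and let Π̂ ∈ ℝ^{n×ν} solve Π̂S = AΠ̂ + B·(HΠ_ξ). Then Π_x = Π + Π̂, and consequently the closed-loop moment decomposes as M_cl = CΠ_x + DHΠ_ξ + QL = (CΠ + QL) + (CΠ̂ + D·(HΠ_ξ)), i.e., M_cl = M_open + T_S(M_c) where M_c = HΠ_ξ. -/

import Mathlib

open Matrix Polynomial

private lemma charpoly_root_mem_spectrum {d : ℕ} (M : Matrix (Fin d) (Fin d) ℂ) (μ : ℂ)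
    (h : (M.charpoly).eval μ = 0) : μ ∈ spectrum ℂ M := by
  rw [spectrum.mem_iff]
  have hdet : (algebraMap ℂ (Matrix (Fin d) (Fin d) ℂ) μ - M).det = (M.charpoly).eval μ := by
    rw [Matrix.charpoly, _root_.eval_det, Matrix.matPolyEquiv_charmatrix]
    simp [Matrix.scalar, algebraMap_eq_diagonal]
  rw [Matrix.isUnit_iff_isUnit_det, hdet, h]
  simp

private lemma aeval_comm {k l : ℕ} (A : Matrix (Fin k) (Fin k) ℂ) (S : Matrix (Fin l) (Fin l) ℂ)
    (W : Matrix (Fin k) (Fin l) ℂ) (hW : W * S = A * W) (p : ℂ[X]) :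
    W * (aeval S p) = (aeval A p) * W := by
  have hpow : ∀ j : ℕ, W * S ^ j = A ^ j * W := by
    intro j
    induction j with
    | zero => simp
    | succ j ih =>
        rw [pow_succ, pow_succ, ← Matrix.mul_assoc, ih, Matrix.mul_assoc, hW, ← Matrix.mul_assoc]
  induction p using Polynomial.induction_on' with
  | add p q hp hq => simp [map_add, Matrix.mul_add, Matrix.add_mul, hp, hq]
  | monomial j c =>
      rw [aeval_monomial, aeval_monomial, ← Algebra.smul_def, ← Algebra.smul_def,
        Matrix.mul_smul, Matrix.smul_mul, hpow]

private lemma sylvester_unique {k l : ℕ} (A : Matrix (Fin k) (Fin k) ℂ)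
    (S : Matrix (Fin l) (Fin l) ℂ)
    (hdisj : ∀ μ : ℂ, ¬(μ ∈ spectrum ℂ A ∧ μ ∈ spectrum ℂ S))
    (W : Matrix (Fin k) (Fin l) ℂ) (hW : W * S = A * W) : W = 0 := by
  set p := A.charpoly with hp
  have hunit : IsUnit (aeval S p) := by
    by_contra hu
    have hsplit : p = (p.roots.map fun a => X - C a).prod :=
      (IsAlgClosed.splits p).eq_prod_roots_of_monic A.charpoly_monic
    rw [hsplit] at hu
    obtain ⟨μ, hμS, hμp⟩ := spectrum.exists_mem_of_not_isUnit_aeval_prod hu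
    exact hdisj μ ⟨charpoly_root_mem_spectrum A μ hμp, hμS⟩
  have h0 : W * (aeval S p) = 0 := by
    rw [aeval_comm A S W hW, hp, Matrix.aeval_self_charpoly, Matrix.zero_mul]
  calc W = W * (aeval S p) * (↑hunit.unit⁻¹ : Matrix (Fin l) (Fin l) ℂ) := by
            rw [Matrix.mul_assoc, IsUnit.mul_val_inv, Matrix.mul_one]
       _ = 0 := by rw [h0, Matrix.zero_mul]

private lemma sylvester_unique_real {k l : ℕ} (A : Matrix (Fin k) (Fin k) ℝ)
    (S : Matrix (Fin l) (Fin l) ℝ)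
    (hdisj : ∀ μ : ℂ, ¬(μ ∈ spectrum ℂ (A.map Complex.ofReal) ∧
      μ ∈ spectrum ℂ (S.map Complex.ofReal)))
    (W : Matrix (Fin k) (Fin l) ℝ) (hW : W * S = A * W) : W = 0 := by
  have hmap : (W.map (Complex.ofRealHom : ℝ →+* ℂ)) * (S.map Complex.ofRealHom) =
      (A.map Complex.ofRealHom) * (W.map Complex.ofRealHom) := by
    rw [← Matrix.map_mul, ← Matrix.map_mul, hW]
  have h := sylvester_unique (A.map Complex.ofRealHom) (S.map Complex.ofRealHom) hdisj
    (W.map Complex.ofRealHom) hmap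
  ext i j
  have h2 := congrFun (congrFun h i) j
  simpa using h2

/-- Assuming disjoint spectra of `A` and `S`, if `(Π_x, Π_ξ)` solves the
closed-loop Sylvester equation, `Π` solves `ΠS = AΠ + PL` and `Π̂` solves
`Π̂S = AΠ̂ + B(HΠ_ξ)`, then `Π_x = Π + Π̂` and the closed-loop moment decomposes as
`M_cl = M_open + T_S(M_c)` with `M_c = HΠ_ξ`. -/
theorem closed_loop_moment_decomposition (n m p q ν ρ : ℕ)
    (A : Matrix (Fin n) (Fin n) ℝ) (B : Matrix (Fin n) (Fin m) ℝ)
    (C : Matrix (Fin p) (Fin n) ℝ) (D : Matrix (Fin p) (Fin m) ℝ)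
    (P : Matrix (Fin n) (Fin q) ℝ) (Q : Matrix (Fin p) (Fin q) ℝ)
    (S : Matrix (Fin ν) (Fin ν) ℝ) (L : Matrix (Fin q) (Fin ν) ℝ)
    (F : Matrix (Fin ρ) (Fin ρ) ℝ) (G : Matrix (Fin ρ) (Fin p) ℝ)
    (H : Matrix (Fin m) (Fin ρ) ℝ)
    (hdisj : ∀ μ : ℂ, ¬(μ ∈ spectrum ℂ (A.map Complex.ofReal) ∧
      μ ∈ spectrum ℂ (S.map Complex.ofReal)))
    (Pix : Matrix (Fin n) (Fin ν) ℝ) (Piξ : Matrix (Fin ρ) (Fin ν) ℝ)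
    (hcl : Matrix.fromRows Pix Piξ * S =
      Matrix.fromBlocks A (B * H) (G * C) (F + G * D * H) * Matrix.fromRows Pix Piξ +
        Matrix.fromRows P (G * Q) * L)
    (Pi : Matrix (Fin n) (Fin ν) ℝ) (hPi : Pi * S = A * Pi + P * L)
    (Pihat : Matrix (Fin n) (Fin ν) ℝ)
    (hPihat : Pihat * S = A * Pihat + B * (H * Piξ)) :
    Pix = Pi + Pihat ∧
    C * Pix + D * (H * Piξ) + Q * L =
      (C * Pi + Q * L) + (C * Pihat + D * (H * Piξ)) := by
  have htop : Pix * S = A * Pix + B * H * Piξ + P * L := by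
    have h := congrArg Matrix.toRows₁ hcl
    rw [Matrix.fromRows_mul, Matrix.fromBlocks_mul_fromRows, Matrix.fromRows_mul] at h
    ext i j
    have h2 := congrFun (congrFun h i) j
    simpa [Matrix.toRows₁, Matrix.fromRows_apply_inl] using h2
  have hX : (Pix - Pi - Pihat) * S = A * (Pix - Pi - Pihat) := by
    rw [Matrix.sub_mul, Matrix.sub_mul, htop, hPi, hPihat, Matrix.mul_sub, Matrix.mul_sub,
      ← Matrix.mul_assoc]
    abel
  have h0 := sylvester_unique_real A S hdisj _ hX
  have hPix : Pix = Pi + Pihat :=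
    sub_eq_zero.mp (by rw [← h0]; abel : Pix - (Pi + Pihat) = 0)
  refine ⟨hPix, ?_⟩
  rw [hPix, Matrix.mul_add]
  abel
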